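/- Let I₁ ⊆ ℝ[x_a : a ∈ A] (A a finite index set) be the ideal generated by Σ_{a∈A} x_a² − 1, the polynomials x_a³ − x_a for all a ∈ A, and x_a x_b for all a ≠ b. Then the real variety of I₁ equals the set of signed standard basis vectors {±e_a : a ∈ A}, and I₁ is a real radical ideal. -/

import Mathlib

open MvPolynomial

private lemma single_sum_aux {A : Type*} [Fintype A] [DecidableEq A] (b : A) (v : ℝ)
    (g : A → MvPolynomial A ℝ) :
    (∑ a : A, C ((Pi.single b v : A → ℝ) a) * g a) = C v * g b := by
  rw [Finset.sum_eq_single b]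
  · simp
  · intro a _ hab
    simp [Pi.single_eq_of_ne hab]
  · simp

private lemma reduce_aux {A : Type*} [Fintype A] [DecidableEq A]
    {I : Ideal (MvPolynomial A ℝ)}
    (hX3 : ∀ a : A, X a ^ 3 - X a ∈ I)
    (hXX : ∀ a b : A, a ≠ b → X a * X b ∈ I)
    (p : MvPolynomial A ℝ) :
    ∃ (c : ℝ) (l m : A → ℝ),
      p - (C c + ∑ a : A, C (l a) * X a + ∑ a : A, C (m a) * X a ^ 2) ∈ I := by
  induction p using MvPolynomial.induction_on with
  | C r =>
      refine ⟨r, 0, 0, ?_⟩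
      simp
  | add p q hp hq =>
      obtain ⟨c1, l1, m1, h1⟩ := hp
      obtain ⟨c2, l2, m2, h2⟩ := hq
      refine ⟨c1 + c2, l1 + l2, m1 + m2, ?_⟩
      have := I.add_mem h1 h2
      convert this using 1
      simp only [Pi.add_apply, map_add, add_mul, Finset.sum_add_distrib]
      ring
  | mul_X p b hp =>
      obtain ⟨c, l, m, h⟩ := hp
      refine ⟨0, Pi.single b (c + m b), Pi.single b (l b), ?_⟩
      have key : p * X b -
          (C 0 + ∑ a : A, C ((Pi.single b (c + m b) : A → ℝ) a) * X a +
            ∑ a : A, C ((Pi.single b (l b) : A → ℝ) a) * X a ^ 2)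
          = (p - (C c + ∑ a : A, C (l a) * X a + ∑ a : A, C (m a) * X a ^ 2)) * X b
            + C (m b) * (X b ^ 3 - X b)
            + ∑ a ∈ Finset.univ.erase b, (C (l a) + C (m a) * X a) * (X a * X b) := by
        rw [single_sum_aux, single_sum_aux]
        have e1 : (∑ a : A, C (l a) * X a)
            = C (l b) * X b + ∑ a ∈ Finset.univ.erase b, C (l a) * X a :=
          (Finset.add_sum_erase _ _ (Finset.mem_univ b)).symm
        have e2 : (∑ a : A, C (m a) * X a ^ 2)
            = C (m b) * X b ^ 2 + ∑ a ∈ Finset.univ.erase b, C (m a) * X a ^ 2 :=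
          (Finset.add_sum_erase _ _ (Finset.mem_univ b)).symm
        have e3 : (∑ a ∈ Finset.univ.erase b, (C (l a) + C (m a) * X a) * (X a * X b))
            = (∑ a ∈ Finset.univ.erase b, C (l a) * X a) * X b
              + (∑ a ∈ Finset.univ.erase b, C (m a) * X a ^ 2) * X b := by
          rw [Finset.sum_mul, Finset.sum_mul, ← Finset.sum_add_distrib]
          refine Finset.sum_congr rfl fun a _ => by ring
        rw [e1, e2, e3]
        simp only [map_add, map_zero]
        ring
      rw [key]
      refine I.add_mem (I.add_mem (I.mul_mem_right _ h) (I.mul_mem_left _ (hX3 b))) ?_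
      exact Ideal.sum_mem _ fun a ha => I.mul_mem_left _ (hXX a b (Finset.ne_of_mem_erase ha))

/-- For `I₁ = ⟨Σ x_a² − 1, x_a³ − x_a, x_a x_b (a ≠ b)⟩ ⊆ ℝ[x_a : a ∈ A]`:
the real variety of `I₁` is the set of signed standard basis vectors `{±e_a}`, and
`I₁` is real radical, i.e. `I₁` equals the vanishing ideal of its real variety. -/
theorem stmt_14 (A : Type*) [Fintype A] [DecidableEq A]
    (I₁ : Ideal (MvPolynomial A ℝ))
    (hI₁ : I₁ = Ideal.span ({(∑ a : A, (MvPolynomial.X a) ^ 2) - 1} ∪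
      {p | ∃ a : A, p = (MvPolynomial.X a) ^ 3 - MvPolynomial.X a} ∪
      {p | ∃ a b : A, a ≠ b ∧ p = MvPolynomial.X a * MvPolynomial.X b})) :
    MvPolynomial.zeroLocus ℝ I₁ =
      {x : A → ℝ | ∃ a : A, x = Pi.single a 1 ∨ x = Pi.single a (-1)} ∧
    MvPolynomial.vanishingIdeal ℝ (MvPolynomial.zeroLocus ℝ I₁) = I₁ := by
  have hgen1 : (∑ a : A, (X a : MvPolynomial A ℝ) ^ 2) - 1 ∈ I₁ := by
    rw [hI₁]; exact Ideal.subset_span (Or.inl (Or.inl rfl))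
  have hgen2 : ∀ a : A, (X a : MvPolynomial A ℝ) ^ 3 - X a ∈ I₁ := fun a => by
    rw [hI₁]; exact Ideal.subset_span (Or.inl (Or.inr ⟨a, rfl⟩))
  have hgen3 : ∀ a b : A, a ≠ b → (X a * X b : MvPolynomial A ℝ) ∈ I₁ := fun a b hab => by
    rw [hI₁]; exact Ideal.subset_span (Or.inr ⟨a, b, hab, rfl⟩)
  have mem_zl : ∀ (a : A) (t : ℝ), t ^ 2 = 1 → ∀ p ∈ I₁, eval (Pi.single a t) p = 0 := by
    intro a t ht
    have hle : I₁ ≤ RingHom.ker (eval (Pi.single a t)) := by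
      rw [hI₁, Ideal.span_le]
      intro q hq
      simp only [Set.mem_union, Set.mem_singleton_iff, Set.mem_setOf_eq] at hq
      rcases hq with (rfl | ⟨b, rfl⟩) | ⟨b, b', hbb, rfl⟩
      · simp only [SetLike.mem_coe, RingHom.mem_ker, map_sub, map_sum, map_pow, map_one, eval_X]
        rw [Finset.sum_eq_single a]
        · simp [ht]
        · intro b _ hb; simp [Pi.single_eq_of_ne hb]
        · simp
      · simp only [SetLike.mem_coe, RingHom.mem_ker, map_sub, map_pow, eval_X]
        by_cases hb : b = a
        · subst hb
          simp only [Pi.single_eq_same]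
          rw [show t ^ 3 - t = t * (t ^ 2 - 1) from by ring, ht]
          ring
        · simp [Pi.single_eq_of_ne hb]
      · simp only [SetLike.mem_coe, RingHom.mem_ker, map_mul, eval_X]
        by_cases hb : b = a
        · subst hb
          have : b' ≠ b := fun h => hbb h.symm
          simp [Pi.single_eq_of_ne this]
        · simp [Pi.single_eq_of_ne hb]
    exact fun p hp => hle hp
  have hZL : MvPolynomial.zeroLocus ℝ I₁ =
      {x : A → ℝ | ∃ a : A, x = Pi.single a 1 ∨ x = Pi.single a (-1)} := by
    ext x
    simp only [mem_zeroLocus_iff, Set.mem_setOf_eq]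
    constructor
    · intro hx
      have h1 : (∑ a : A, (x a) ^ 2) = 1 := by
        have := hx _ hgen1
        simp only [map_sub, map_sum, map_pow, map_one, aeval_X, sub_eq_zero] at this
        exact this
      have h3 : ∀ a b : A, a ≠ b → x a * x b = 0 := fun a b hab => by
        have := hx _ (hgen3 a b hab)
        simpa using this
      obtain ⟨a, ha⟩ : ∃ a : A, x a ≠ 0 := by
        by_contra h
        push_neg at h
        simp [h] at h1
      have hz : ∀ b, b ≠ a → x b = 0 := by
        intro b hb
        rcases mul_eq_zero.1 (h3 b a hb) with h | h
        · exact h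
        · exact absurd h ha
      have hsum : x a ^ 2 = 1 := by
        rw [← h1, Finset.sum_eq_single a]
        · intro b _ hb; simp [hz b hb]
        · simp
      have hxx : x = Pi.single a (x a) := by
        funext b
        by_cases hb : b = a
        · subst hb; simp
        · simp [Pi.single_eq_of_ne hb, hz b hb]
      have hxa : x a = 1 ∨ x a = -1 := by
        have : (x a - 1) * (x a + 1) = 0 := by nlinarith
        rcases mul_eq_zero.1 this with h | h
        · left; linarith
        · right; linarith
      exact ⟨a, hxa.imp (fun h => by rw [hxx, h]) (fun h => by rw [hxx, h])⟩
    · rintro ⟨a, rfl | rfl⟩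
      · exact mem_zl a 1 (by norm_num)
      · exact mem_zl a (-1) (by norm_num)
  refine ⟨hZL, le_antisymm ?_ (MvPolynomial.le_vanishingIdeal_zeroLocus I₁)⟩
  intro p hp
  rw [MvPolynomial.mem_vanishingIdeal_iff] at hp
  obtain ⟨c, l, m, hmem⟩ := reduce_aux hgen2 hgen3 p
  set q : MvPolynomial A ℝ :=
    C c + ∑ a : A, C (l a) * X a + ∑ a : A, C (m a) * X a ^ 2 with hqdef
  have hq_eval : ∀ (a : A) (t : ℝ), t ^ 2 = 1 → eval (Pi.single a t) q = c + l a * t + m a := by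
    intro a t ht
    set x : A → ℝ := Pi.single a t with hx
    simp only [hqdef, map_add, map_sum, map_mul, map_pow, eval_C, eval_X]
    have e1 : (∑ b : A, l b * x b) = l a * t := by
      rw [Finset.sum_eq_single a]
      · simp [hx]
      · intro b _ hb; simp [hx, Pi.single_eq_of_ne hb]
      · simp
    have e2 : (∑ b : A, m b * x b ^ 2) = m a := by
      rw [Finset.sum_eq_single a]
      · simp [hx, ht]
      · intro b _ hb; simp [hx, Pi.single_eq_of_ne hb]
      · simp
    rw [e1, e2]
  have hq_zero : ∀ (a : A) (t : ℝ), t ^ 2 = 1 → c + l a * t + m a = 0 := by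
    intro a t ht
    have hx : Pi.single a t ∈ MvPolynomial.zeroLocus ℝ I₁ := by
      intro r hr; exact mem_zl a t ht r hr
    have h1 : eval (Pi.single a t) p = 0 := hp _ hx
    have h2 : eval (Pi.single a t) (p - q) = 0 := mem_zl a t ht _ hmem
    rw [map_sub, h1, hq_eval a t ht] at h2
    linarith
  have hl : ∀ a : A, l a = 0 := by
    intro a
    have h1 := hq_zero a 1 (by norm_num)
    have h2 := hq_zero a (-1) (by norm_num)
    linarith
  have hm : ∀ a : A, m a = -c := by
    intro a
    have h1 := hq_zero a 1 (by norm_num)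
    have := hl a
    linarith
  have hq : q = C (-c) * ((∑ a : A, (X a : MvPolynomial A ℝ) ^ 2) - 1) := by
    simp only [hqdef, hl, hm, map_zero, zero_mul, Finset.sum_const_zero, add_zero]
    simp only [map_neg, mul_sub, Finset.mul_sum, mul_one]
    ring
  have : p = (p - q) + C (-c) * ((∑ a : A, (X a : MvPolynomial A ℝ) ^ 2) - 1) := by
    rw [← hq]; ring
  rw [this]
  exact I₁.add_mem hmem (I₁.mul_mem_left _ hgen1)
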